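/- For natural numbers n and j with j ≤ n (so that (-2n+j)_k ≠ 0 for 0 ≤ k ≤ n) and any complex number a, ∑_{k=0}^{n} (-n)_k (a)_k 2^k / ((-2n+j)_k k!) = (2^{2n-j} (n-j)! / (2n-j)!) · ∑_{r=0}^{j} C(j,r) ((a+1-r)/2)_n. -/

import Mathlib

open Finset

/-- The Pochhammer symbol (rising factorial) `(x)_k = x (x+1) ⋯ (x+k-1)`. -/
noncomputable def poch (x : ℂ) (k : ℕ) : ℂ := (ascPochhammer ℂ k).eval x

lemma poch_zero (x : ℂ) : poch x 0 = 1 := by simp [poch]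

lemma poch_succ (x : ℂ) (k : ℕ) : poch x (k + 1) = poch x k * (x + k) := by
  simp [poch, ascPochhammer_succ_eval]

lemma poch_succ_left (x : ℂ) (k : ℕ) : poch x (k + 1) = x * poch (x + 1) k := by
  simp only [poch, ascPochhammer_succ_left, Polynomial.eval_mul, Polynomial.eval_X,
    Polynomial.eval_comp, Polynomial.eval_add, Polynomial.eval_one]

lemma poch_sub_one (a : ℂ) (k : ℕ) : poch (a - 1) k = poch a k - k * poch a (k - 1) := by
  cases k with
  | zero => simp [poch_zero]
  | succ k =>
    rw [poch_succ_left, sub_add_cancel, poch_succ, Nat.add_sub_cancel]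
    push_cast; ring

lemma poch_prod (x : ℂ) (n : ℕ) : poch x n = ∏ i ∈ range n, (x + i) := by
  induction n with
  | zero => simp [poch_zero]
  | succ n ih => rw [poch_succ, ih, prod_range_succ]

lemma poch_neg_nat (m : ℕ) : ∀ k : ℕ, poch (-(m : ℂ)) k = (-1) ^ k * (m.descFactorial k : ℂ) := by
  intro k
  induction k with
  | zero => simp [poch_zero]
  | succ k ih =>
    rw [poch_succ, ih, Nat.descFactorial_succ]
    rcases le_or_gt k m with h | h
    · push_cast [Nat.cast_sub h]
      ring
    · rw [Nat.descFactorial_eq_zero_iff_lt.mpr h]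
      push_cast
      ring

/-- Auxiliary sum. -/
noncomputable def G (n c : ℕ) (a : ℂ) : ℂ :=
  ∑ k ∈ range (n + 1), (n.choose k : ℂ) * poch a k * 2 ^ k * ((c - k).factorial : ℂ)

noncomputable def sA (n m : ℕ) (a : ℂ) (k : ℕ) : ℂ :=
  (n.choose k : ℂ) * 2 ^ k * k * ((n + m + 1 - k : ℕ) : ℂ) *
    ((n + m - k).factorial : ℂ) * poch a (k - 1)

lemma lemA_term (n m k : ℕ) (hk : k ≤ n) (a : ℂ) :
    (n.choose k : ℂ) * poch a k * 2 ^ k * (((n + m + 1) - k).factorial : ℂ)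
      + (n.choose k : ℂ) * poch (a - 1) k * 2 ^ k * (((n + m + 1) - k).factorial : ℂ)
      - 2 * (m + 1) * ((n.choose k : ℂ) * poch a k * 2 ^ k * (((n + m) - k).factorial : ℂ))
      = sA n m a (k + 1) - sA n m a k := by
  rw [poch_sub_one]
  rcases eq_or_lt_of_le hk with heq | hlt
  · obtain rfl : n = k := heq.symm
    have e0 : n.choose (n + 1) = 0 := Nat.choose_succ_self n
    have e1 : n + m + 1 - n = m + 1 := by omega
    have e2 : n + m - n = m := by omega
    simp only [sA, e0, e1, e2, Nat.choose_self, Nat.factorial_succ, Nat.cast_zero]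
    push_cast
    ring
  · obtain ⟨e, he⟩ : ∃ e, n = k + e + 1 := ⟨n - k - 1, by omega⟩
    have e1 : n + m + 1 - k = e + m + 2 := by omega
    have e2 : n + m - k = e + m + 1 := by omega
    have e3 : n + m + 1 - (k + 1) = e + m + 1 := by omega
    have e4 : n + m - (k + 1) = e + m := by omega
    have hch : (n.choose (k + 1) : ℂ) * (k + 1) = (n.choose k : ℂ) * (e + 1) := by
      have h := Nat.choose_succ_right_eq n k
      have hnk : n - k = e + 1 := by omega
      rw [hnk] at h
      exact_mod_cast congrArg (Nat.cast (R := ℂ)) h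
    simp only [sA, e1, e2, e3, e4, Nat.add_sub_cancel, Nat.factorial_succ]
    push_cast
    linear_combination (-(2 ^ (k + 1) * ((e : ℂ) + m + 1) * ((e + m).factorial : ℂ)
      * poch a k)) * hch

lemma lemA (n m : ℕ) (a : ℂ) :
    G n (n + m + 1) a + G n (n + m + 1) (a - 1) - 2 * (m + 1) * G n (n + m) a = 0 := by
  have hstep : G n (n + m + 1) a + G n (n + m + 1) (a - 1) - 2 * (m + 1) * G n (n + m) a
      = ∑ k ∈ range (n + 1), (sA n m a (k + 1) - sA n m a k) := by
    rw [G, G, G, mul_sum, ← sum_add_distrib, ← sum_sub_distrib]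
    refine sum_congr rfl fun k hk => ?_
    exact lemA_term n m k (Nat.lt_succ_iff.mp (mem_range.mp hk)) a
  rw [hstep, Finset.sum_range_sub (sA n m a) (n + 1)]
  have h0 : sA n m a 0 = 0 := by simp [sA]
  have h1 : sA n m a (n + 1) = 0 := by simp [sA, Nat.choose_succ_self]
  rw [h0, h1, sub_zero]

noncomputable def vB (n : ℕ) (a : ℂ) (k : ℕ) : ℂ :=
  (k : ℂ) * ((n + 1).choose k : ℂ) * poch a k * 2 ^ k * ((2 * n + 1 - k).factorial : ℂ)

lemma lemB_term (n k : ℕ) (hk : k ≤ n + 1) (a : ℂ) :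
    ((n + 1).choose k : ℂ) * poch a k * 2 ^ k * ((2 * (n + 1) - k).factorial : ℂ)
      - 2 * (n + 1) * (a + 2 * n + 1) *
        ((n.choose k : ℂ) * poch a k * 2 ^ k * ((2 * n - k).factorial : ℂ))
      = vB n a k - vB n a (k + 1) := by
  rcases eq_or_lt_of_le hk with heq | hlt
  · obtain rfl : n + 1 = k := heq.symm
    have e0 : n.choose (n + 1) = 0 := Nat.choose_succ_self n
    have e1 : 2 * (n + 1) - (n + 1) = n + 1 := by omega
    have e2 : 2 * n + 1 - (n + 1) = n := by omega
    have e3 : (n + 1).choose (n + 1 + 1) = 0 := Nat.choose_succ_self (n + 1)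
    simp only [vB, e0, e1, e2, e3, Nat.choose_self, Nat.factorial_succ, Nat.cast_zero]
    push_cast
    ring
  · have hkn : k ≤ n := by omega
    obtain ⟨e, rfl⟩ : ∃ e, n = k + e := ⟨n - k, by omega⟩
    have e1 : 2 * (k + e + 1) - k = (k + 2 * e) + 2 := by omega
    have e2 : 2 * (k + e) - k = k + 2 * e := by omega
    have e3 : 2 * (k + e) + 1 - k = (k + 2 * e) + 1 := by omega
    have e4 : 2 * (k + e) + 1 - (k + 1) = k + 2 * e := by omega
    have hch : (((k + e + 1).choose (k + 1) : ℂ)) * (k + 1)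
        = ((k : ℂ) + e + 1) * ((k + e).choose k : ℂ) := by
      have h := (Nat.add_one_mul_choose_eq (k + e) k).symm
      exact_mod_cast congrArg (Nat.cast (R := ℂ)) h
    have hrel : (((k + e + 1).choose k : ℂ)) * (e + 1)
        = ((k : ℂ) + e + 1) * ((k + e).choose k : ℂ) := by
      have h1 := Nat.choose_succ_right_eq (k + e + 1) k
      have h2 : k + e + 1 - k = e + 1 := by omega
      rw [h2] at h1
      have h3 := Nat.add_one_mul_choose_eq (k + e) k
      have h4 : (k + e + 1).choose k * (e + 1) = (k + e + 1) * (k + e).choose k := by omega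
      exact_mod_cast congrArg (Nat.cast (R := ℂ)) h4
    simp only [vB, e1, e2, e3, e4, Nat.factorial_succ, poch_succ]
    push_cast
    linear_combination (poch a k * (a + k) * 2 ^ (k + 1) * (((k + 2 * e).factorial : ℂ))) * hch
      + (2 * (((k : ℂ) + 2 * e) + 1) * poch a k * 2 ^ k * (((k + 2 * e).factorial : ℂ))) * hrel

lemma lemB (n : ℕ) (a : ℂ) :
    G n (2 * n) a = 2 ^ n * (n.factorial : ℂ) * ∏ i ∈ range n, (a + 2 * i + 1) := by
  induction n generalizing a with
  | zero => simp [G, poch_zero]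
  | succ n ih =>
    have hq : G n (2 * n) a
        = ∑ k ∈ range (n + 2), (n.choose k : ℂ) * poch a k * 2 ^ k *
            ((2 * n - k).factorial : ℂ) := by
      rw [G]
      conv_rhs => rw [sum_range_succ]
      simp [Nat.choose_succ_self]
    have hstep : G (n + 1) (2 * (n + 1)) a
        = 2 * (n + 1) * (a + 2 * n + 1) * G n (2 * n) a := by
      have h0 : G (n + 1) (2 * (n + 1)) a - 2 * (n + 1) * (a + 2 * n + 1) * G n (2 * n) a
          = ∑ k ∈ range (n + 2), (vB n a k - vB n a (k + 1)) := by
        rw [G, hq, mul_sum, ← sum_sub_distrib]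
        refine sum_congr rfl fun k hk => ?_
        exact lemB_term n k (Nat.lt_succ_iff.mp (mem_range.mp hk)) a
      rw [Finset.sum_range_sub' (vB n a) (n + 2)] at h0
      have h1 : vB n a 0 = 0 := by simp [vB]
      have h2 : vB n a (n + 2) = 0 := by simp [vB, Nat.choose_succ_self]
      rw [h1, h2, sub_zero] at h0
      exact sub_eq_zero.mp h0
    rw [hstep, ih, prod_range_succ]
    push_cast [Nat.factorial_succ]
    ring

lemma claimC (n : ℕ) : ∀ j : ℕ, j ≤ n → ∀ a : ℂ,
    2 ^ j * (n.factorial : ℂ) * G n (2 * n - j) a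
      = ((n - j).factorial : ℂ) *
          ∑ r ∈ range (j + 1), (j.choose r : ℂ) * G n (2 * n) (a - r) := by
  intro j
  induction j with
  | zero => intro _ a; simp
  | succ j ih =>
    intro hj a
    have hj' : j ≤ n := by omega
    -- Lemma A instance
    have em1 : n + (n - j - 1) + 1 = 2 * n - j := by omega
    have em2 : n + (n - j - 1) = 2 * n - (j + 1) := by omega
    have em3 : ((n - j - 1 : ℕ) : ℂ) + 1 = ((n - j : ℕ) : ℂ) := by
      have h : n - j - 1 + 1 = n - j := by omega
      exact_mod_cast congrArg (Nat.cast (R := ℂ)) h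
    have hA := lemA n (n - j - 1) a
    rw [em1, em2] at hA
    rw [sub_eq_zero] at hA
    rw [em3] at hA
    -- Pascal
    have hP : ∑ r ∈ range (j + 2), ((j + 1).choose r : ℂ) * G n (2 * n) (a - r)
        = ∑ r ∈ range (j + 1), (j.choose r : ℂ) * G n (2 * n) (a - r)
          + ∑ r ∈ range (j + 1), (j.choose r : ℂ) * G n (2 * n) (a - 1 - r) := by
      rw [Finset.sum_range_succ' (fun r => ((j + 1).choose r : ℂ) * G n (2 * n) (a - r)) (j + 1)]
      have h1 : ∀ r ∈ range (j + 1),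
          ((j + 1).choose (r + 1) : ℂ) * G n (2 * n) (a - (r + 1 : ℕ))
            = (j.choose r : ℂ) * G n (2 * n) (a - 1 - r)
              + (j.choose (r + 1) : ℂ) * G n (2 * n) (a - (r + 1 : ℕ)) := by
        intro r _
        rw [Nat.choose_succ_succ']
        have harg : a - ((r + 1 : ℕ) : ℂ) = a - 1 - r := by push_cast; ring
        rw [harg]
        push_cast
        ring
      rw [sum_congr rfl h1, sum_add_distrib]
      have h2 : ∑ r ∈ range (j + 1), (j.choose (r + 1) : ℂ) * G n (2 * n) (a - (r + 1 : ℕ))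
            + ((j + 1).choose 0 : ℂ) * G n (2 * n) (a - (0 : ℕ))
          = ∑ r ∈ range (j + 1), (j.choose r : ℂ) * G n (2 * n) (a - r) := by
        have e0 : (((j + 1).choose 0 : ℕ) : ℂ) = ((j.choose 0 : ℕ) : ℂ) := by simp
        rw [e0,
          ← Finset.sum_range_succ' (fun r => (j.choose r : ℂ) * G n (2 * n) (a - r)) (j + 1),
          sum_range_succ]
        simp [Nat.choose_succ_self]
      rw [add_assoc, h2]
      ring
    -- cancellation
    have hf : ((n - j).factorial : ℂ) = ((n - j : ℕ) : ℂ) * ((n - (j + 1)).factorial : ℂ) := by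
      have h : (n - j).factorial = (n - j) * (n - (j + 1)).factorial := by
        rw [show n - j = (n - (j + 1)) + 1 by omega, Nat.factorial_succ]
      exact_mod_cast congrArg (Nat.cast (R := ℂ)) h
    have hnz : ((n - j : ℕ) : ℂ) ≠ 0 := Nat.cast_ne_zero.mpr (by omega)
    refine mul_right_cancel₀ hnz ?_
    calc (2 ^ (j + 1) * (n.factorial : ℂ) * G n (2 * n - (j + 1)) a) * ((n - j : ℕ) : ℂ)
        = 2 ^ j * (n.factorial : ℂ) *
            (2 * ((n - j : ℕ) : ℂ) * G n (2 * n - (j + 1)) a) := by ring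
      _ = 2 ^ j * (n.factorial : ℂ) * (G n (2 * n - j) a + G n (2 * n - j) (a - 1)) := by
          rw [← hA]
      _ = ((n - j).factorial : ℂ) *
            (∑ r ∈ range (j + 1), (j.choose r : ℂ) * G n (2 * n) (a - r)
              + ∑ r ∈ range (j + 1), (j.choose r : ℂ) * G n (2 * n) (a - 1 - r)) := by
          rw [mul_add, ih hj' a, ih hj' (a - 1), mul_add]
      _ = ((n - (j + 1)).factorial : ℂ) *
            (∑ r ∈ range (j + 2), ((j + 1).choose r : ℂ) * G n (2 * n) (a - r))
            * ((n - j : ℕ) : ℂ) := by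
          rw [hP, hf]; ring

theorem twoF1_negn_a_neg2nPj (n j : ℕ) (hjn : j ≤ n) (a : ℂ) :
    ∑ k ∈ range (n + 1),
        poch (-(n : ℂ)) k * poch a k * 2 ^ k /
          (poch (-(2 * n : ℂ) + j) k * (k.factorial : ℂ))
      = (2 : ℂ) ^ (2 * n - j) * ((n - j).factorial : ℂ) / (((2 * n - j).factorial : ℂ)) *
          ∑ r ∈ range (j + 1), (j.choose r : ℂ) * poch ((a + 1 - r) / 2) n := by
  have h2nj : j ≤ 2 * n := by omega
  have hM : (-(2 * n : ℂ) + j) = -((2 * n - j : ℕ) : ℂ) := by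
    push_cast [Nat.cast_sub h2nj]; ring
  have hL : ∑ k ∈ range (n + 1),
        poch (-(n : ℂ)) k * poch a k * 2 ^ k /
          (poch (-(2 * n : ℂ) + j) k * (k.factorial : ℂ))
      = G n (2 * n - j) a * (((2 * n - j).factorial : ℂ))⁻¹ := by
    rw [G, sum_mul]
    refine sum_congr rfl fun k hk => ?_
    have hkn : k ≤ n := Nat.lt_succ_iff.mp (mem_range.mp hk)
    rw [hM, poch_neg_nat, poch_neg_nat]
    have hd1 : ((n.descFactorial k : ℕ) : ℂ) = (k.factorial : ℂ) * (n.choose k : ℂ) := by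
      exact_mod_cast congrArg (Nat.cast (R := ℂ)) (Nat.descFactorial_eq_factorial_mul_choose n k)
    have hd2 : ((2 * n - j - k).factorial : ℂ) * (((2 * n - j).descFactorial k : ℕ) : ℂ)
        = (((2 * n - j).factorial : ℕ) : ℂ) := by
      exact_mod_cast congrArg (Nat.cast (R := ℂ))
        (Nat.factorial_mul_descFactorial (show k ≤ 2 * n - j by omega))
    have hne1 : (((2 * n - j).descFactorial k : ℕ) : ℂ) ≠ 0 := by
      rw [Nat.cast_ne_zero]
      intro h
      exact absurd (Nat.descFactorial_eq_zero_iff_lt.mp h) (by omega)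
    have hne2 : ((k.factorial : ℕ) : ℂ) ≠ 0 := Nat.cast_ne_zero.mpr k.factorial_ne_zero
    have hne3 : ((-1 : ℂ)) ^ k ≠ 0 := pow_ne_zero k (by norm_num)
    have hne4 : (((2 * n - j).factorial : ℕ) : ℂ) ≠ 0 :=
      Nat.cast_ne_zero.mpr (2 * n - j).factorial_ne_zero
    rw [hd1]
    field_simp
    linear_combination (-((n.choose k : ℂ) * poch a k)) * hd2
  rw [hL]
  have hprod : ∀ r : ℕ, G n (2 * n) (a - r)
      = 2 ^ n * (n.factorial : ℂ) * (2 ^ n * poch ((a + 1 - r) / 2) n) := by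
    intro r
    rw [lemB]
    have h1 : ∏ i ∈ range n, ((a - r) + 2 * i + 1)
        = ∏ i ∈ range n, ((2 : ℂ) * ((a + 1 - r) / 2 + i)) :=
      prod_congr rfl fun i _ => by ring
    rw [h1, Finset.prod_mul_distrib, prod_const, card_range, poch_prod]
  have hC := claimC n j hjn a
  have hsum : ∑ r ∈ range (j + 1), (j.choose r : ℂ) * G n (2 * n) (a - r)
      = 2 ^ n * 2 ^ n * (n.factorial : ℂ) *
          ∑ r ∈ range (j + 1), (j.choose r : ℂ) * poch ((a + 1 - r) / 2) n := by
    rw [mul_sum]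
    refine sum_congr rfl fun r _ => ?_
    rw [hprod r]; ring
  rw [hsum] at hC
  have hp : (2 : ℂ) ^ (2 * n - j) * 2 ^ j = 2 ^ n * 2 ^ n := by
    have h : 2 * n - j + j = n + n := by omega
    rw [← pow_add, h, pow_add]
  have hne5 : (((2 * n - j).factorial : ℕ) : ℂ) ≠ 0 :=
    Nat.cast_ne_zero.mpr (2 * n - j).factorial_ne_zero
  have hne6 : ((n.factorial : ℕ) : ℂ) ≠ 0 := Nat.cast_ne_zero.mpr n.factorial_ne_zero
  have hne7 : (2 : ℂ) ^ j ≠ 0 := pow_ne_zero j (by norm_num)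
  rw [← hp] at hC
  have hG : G n (2 * n - j) a = (2 : ℂ) ^ (2 * n - j) * ((n - j).factorial : ℂ) *
      ∑ r ∈ range (j + 1), (j.choose r : ℂ) * poch ((a + 1 - r) / 2) n := by
    refine mul_left_cancel₀ (mul_ne_zero hne7 hne6) ?_
    linear_combination hC
  rw [hG]
  ring
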